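/- With the affine price p(z) = βz + b (β > 0, b ≥ 0) and incentives I_i(q) = (∑_{j≠i} q_j)(p(f(q_{−i}) + ∑_{j≠i} q_j) − p(‖q‖₁)) where f(q_{−i}) = ∑_{j≠i} ω_j q_j for fixed weights ω ∈ ℝ^N, there is no choice of weights ω such that ∑_{i=1}^N I_i(q) = 0 for all q ∈ ℝ_{≥0}^N, provided N ≥ 2. -/

import Mathlib

open Finset

theorem no_budget_balance (N : ℕ) (hN : 2 ≤ N) (β b : ℝ) (hβ : 0 < β) (hb : 0 ≤ b) :
    ¬ ∃ ω : Fin N → ℝ, ∀ q : Fin N → ℝ, (∀ i, 0 ≤ q i) →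
      ∑ i, (∑ j ∈ Finset.univ.erase i, q j) *
        ((β * ((∑ j ∈ Finset.univ.erase i, ω j * q j) +
            ∑ j ∈ Finset.univ.erase i, q j) + b) -
          (β * (∑ j, q j) + b)) = 0 := by
  rintro ⟨ω, h⟩
  have hcard : (Finset.univ : Finset (Fin N)).card = N := by simp
  -- Step 1: every weight vanishes
  have key : ∀ k : Fin N, ω k = 0 := by
    intro k
    have hk := h (fun j => if j = k then 1 else 0)
      (fun i => by split <;> norm_num)
    have e1 : ∀ i : Fin N,
        (∑ j ∈ Finset.univ.erase i, (if j = k then (1:ℝ) else 0))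
          = if k = i then 0 else 1 := by
      intro i
      rw [Finset.sum_ite_eq' (Finset.univ.erase i) k (fun _ => (1:ℝ))]
      by_cases hki : k = i <;> simp [hki]
    have e2 : ∀ i : Fin N,
        (∑ j ∈ Finset.univ.erase i, ω j * (if j = k then (1:ℝ) else 0))
          = if k = i then 0 else ω k := by
      intro i
      have hmul : ∀ j, ω j * (if j = k then (1:ℝ) else 0) = if j = k then ω j else 0 := by
        intro j; split <;> simp
      simp only [hmul]
      rw [Finset.sum_ite_eq' (Finset.univ.erase i) k ω]
      by_cases hki : k = i <;> simp [hki]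
    have e3 : (∑ j : Fin N, (if j = k then (1:ℝ) else 0)) = 1 := by
      rw [Finset.sum_ite_eq' Finset.univ k (fun _ => (1:ℝ))]; simp
    simp only [e1, e2, e3] at hk
    have e4 : ∀ i : Fin N,
        (if k = i then (0:ℝ) else 1) *
          (β * ((if k = i then 0 else ω k) + (if k = i then 0 else 1)) + b - (β * 1 + b))
          = β * ω k - (if i = k then β * ω k else 0) := by
      intro i
      by_cases hik : k = i
      · simp [hik]
      · have : ¬ i = k := fun hh => hik hh.symm
        simp only [if_neg hik, if_neg this]
        ring
    rw [Finset.sum_congr rfl (fun i _ => e4 i)] at hk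
    rw [Finset.sum_sub_distrib, Finset.sum_const,
      Finset.sum_ite_eq' Finset.univ k (fun _ => β * ω k)] at hk
    simp only [hcard, nsmul_eq_mul, Finset.mem_univ, if_true] at hk
    have hfac : ((N:ℝ) - 1) * (β * ω k) = 0 := by linarith
    have hN1 : ((N:ℝ) - 1) ≠ 0 := by
      have : (2:ℝ) ≤ (N:ℝ) := by exact_mod_cast hN
      linarith
    have := mul_eq_zero.mp hfac
    rcases this with h1 | h1
    · exact absurd h1 hN1
    · rcases mul_eq_zero.mp h1 with h2 | h2
      · exact absurd h2 (ne_of_gt hβ)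
      · exact h2
  -- Step 2: plug in q = e₀ + e₁
  set i0 : Fin N := ⟨0, by omega⟩ with hi0
  set i1 : Fin N := ⟨1, by omega⟩ with hi1
  have hne : i0 ≠ i1 := by simp [hi0, hi1, Fin.ext_iff]
  have hq := h (fun j => (if j = i0 then 1 else 0) + (if j = i1 then 1 else 0))
    (fun i => by positivity)
  have f1 : ∀ (i k : Fin N),
      (∑ j ∈ Finset.univ.erase i, (if j = k then (1:ℝ) else 0))
        = if k = i then 0 else 1 := by
    intro i k
    rw [Finset.sum_ite_eq' (Finset.univ.erase i) k (fun _ => (1:ℝ))]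
    by_cases hki : k = i <;> simp [hki]
  have g1 : ∀ i : Fin N,
      (∑ j ∈ Finset.univ.erase i,
        ((if j = i0 then (1:ℝ) else 0) + (if j = i1 then 1 else 0)))
        = (if i0 = i then 0 else 1) + (if i1 = i then 0 else 1) := by
    intro i
    rw [Finset.sum_add_distrib, f1 i i0, f1 i i1]
  have g2 : ∀ i : Fin N,
      (∑ j ∈ Finset.univ.erase i,
        ω j * ((if j = i0 then (1:ℝ) else 0) + (if j = i1 then 1 else 0))) = 0 := by
    intro i
    apply Finset.sum_eq_zero
    intro j _
    rw [key j]; ring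
  have g3 : (∑ j : Fin N,
      ((if j = i0 then (1:ℝ) else 0) + (if j = i1 then 1 else 0))) = 2 := by
    rw [Finset.sum_add_distrib,
      Finset.sum_ite_eq' Finset.univ i0 (fun _ => (1:ℝ)),
      Finset.sum_ite_eq' Finset.univ i1 (fun _ => (1:ℝ))]
    norm_num
  simp only [g1, g2, g3] at hq
  have g4 : ∀ i : Fin N,
      ((if i0 = i then (0:ℝ) else 1) + (if i1 = i then 0 else 1)) *
        (β * (0 + ((if i0 = i then 0 else 1) + (if i1 = i then 0 else 1))) + b - (β * 2 + b))
        = (if i = i0 then -β else 0) + (if i = i1 then -β else 0) := by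
    intro i
    by_cases h0 : i0 = i
    · subst h0
      simp only [eq_self_iff_true, if_true, if_neg (Ne.symm hne : ¬ i1 = i0), if_neg (hne : ¬ i0 = i1)]
      ring
    · by_cases h1 : i1 = i
      · subst h1
        simp only [eq_self_iff_true, if_true, if_neg (hne : ¬ i0 = i1), if_neg (Ne.symm hne : ¬ i1 = i0)]
        ring
      · simp only [if_neg h0, if_neg h1, if_neg (fun hh => h0 hh.symm : ¬ i = i0),
          if_neg (fun hh => h1 hh.symm : ¬ i = i1)]
        ring
  rw [Finset.sum_congr rfl (fun i _ => g4 i)] at hq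
  rw [Finset.sum_add_distrib,
    Finset.sum_ite_eq' Finset.univ i0 (fun _ => -β),
    Finset.sum_ite_eq' Finset.univ i1 (fun _ => -β)] at hq
  simp only [Finset.mem_univ, if_true] at hq
  linarith
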